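/- Let X be a metrizable space and let f : X → Y be a perfect map (continuous, closed, with compact fibers) from X onto an analytic space Y. Then X is analytic. -/

import Mathlib

open Set Function TopologicalSpace MeasureTheory

universe u

/-- A space is analytic if it is a continuous image of the Baire space `ℕ → ℕ`. -/
def IsAnalyticSpace (X : Type*) [TopologicalSpace X] : Prop :=
  ∃ f : (ℕ → ℕ) → X, Continuous f ∧ Surjective f

/-- A space is Lusin if it is an injective continuous image of the Baire space. -/
def IsLusinSpace (X : Type*) [TopologicalSpace X] : Prop :=
  ∃ f : (ℕ → ℕ) → X, Continuous f ∧ Injective f ∧ Surjective f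

/-- A map is perfect if it is continuous, closed, and has compact fibers. -/
def IsPerfectMap {X Y : Type*} [TopologicalSpace X] [TopologicalSpace Y] (f : X → Y) : Prop :=
  Continuous f ∧ IsClosedMap f ∧ ∀ y : Y, IsCompact (f ⁻¹' {y})

/-- The remainder `βX \ X` of a space in its Stone–Čech compactification. -/
def StoneCechRemainder (X : Type u) [TopologicalSpace X] : Set (StoneCech X) :=
  (Set.range (stoneCechUnit : X → StoneCech X))ᶜ

/-- A space is co-analytic if its Stone–Čech remainder is analytic. -/
def CoAnalytic (X : Type u) [TopologicalSpace X] : Prop :=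
  IsAnalyticSpace ↥(StoneCechRemainder X)

/-- A space is Čech-complete if it is a `Gδ` subset of its Stone–Čech compactification. -/
def CechComplete (X : Type u) [TopologicalSpace X] : Prop :=
  IsGδ (Set.range (stoneCechUnit : X → StoneCech X))

/-- A space is K-analytic if it is a continuous image of a Lindelöf Čech-complete
(Tychonoff) space. -/
def KAnalytic (X : Type u) [TopologicalSpace X] : Prop :=
  ∃ (Y : Type u) (_ : TopologicalSpace Y) (_ : T35Space Y),
    LindelofSpace Y ∧ CechComplete Y ∧ ∃ f : Y → X, Continuous f ∧ Surjective f

/-- A space is K-Lusin if it is an injective continuous image of a Lindelöf Čech-complete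
(Tychonoff) space. -/
def KLusin (X : Type u) [TopologicalSpace X] : Prop :=
  ∃ (Y : Type u) (_ : TopologicalSpace Y) (_ : T35Space Y),
    LindelofSpace Y ∧ CechComplete Y ∧ ∃ f : Y → X, Continuous f ∧ Injective f ∧ Surjective f

/-- The Menger property. -/
def MengerSpace (X : Type*) [TopologicalSpace X] : Prop :=
  ∀ U : ℕ → Set (Set X), (∀ n, ∀ u ∈ U n, IsOpen u) → (∀ n, ⋃₀ U n = univ) →
    ∃ V : ℕ → Set (Set X), (∀ n, V n ⊆ U n ∧ (V n).Finite) ∧ ⋃₀ (⋃ n, V n) = univ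

/-- The Rothberger property. -/
def RothbergerSpace (X : Type*) [TopologicalSpace X] : Prop :=
  ∀ U : ℕ → Set (Set X), (∀ n, ∀ u ∈ U n, IsOpen u) → (∀ n, ⋃₀ U n = univ) →
    ∃ V : ℕ → Set X, (∀ n, V n ∈ U n) ∧ (⋃ n, V n) = univ

/-- A space is productively Lindelöf if its product with every Lindelöf (Tychonoff)
space is Lindelöf. -/
def ProductivelyLindelof (X : Type u) [TopologicalSpace X] : Prop :=
  ∀ (Y : Type u) (_ : TopologicalSpace Y) (_ : T35Space Y),
    LindelofSpace Y → LindelofSpace (X × Y)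

/-- A Michael space is a Lindelöf (Tychonoff) space whose product with the Baire space
is not Lindelöf. -/
def ExistsMichaelSpace : Prop :=
  ∃ (Y : Type u) (_ : TopologicalSpace Y) (_ : T35Space Y),
    LindelofSpace Y ∧ ¬ LindelofSpace (Y × (ℕ → ℕ))

/-- The Hurewicz property: every Čech-complete space in which `X` embeds contains a
σ-compact subspace containing the image of `X`. -/
def HurewiczSpace (X : Type u) [TopologicalSpace X] : Prop :=
  ∀ (Y : Type u) (_ : TopologicalSpace Y) (_ : T35Space Y), CechComplete Y →
    ∀ f : X → Y, Topology.IsEmbedding f → ∃ S : Set Y, IsSigmaCompact S ∧ range f ⊆ S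

/-- A space is projectively σ-compact if each of its continuous images in a separable
metrizable space is σ-compact. -/
def ProjectivelySigmaCompact (X : Type u) [TopologicalSpace X] : Prop :=
  ∀ (M : Type u) (_ : TopologicalSpace M) (_ : SeparableSpace M) (_ : MetrizableSpace M)
    (f : X → M), Continuous f → IsSigmaCompact (range f)

/-- A space is projectively countable if each of its continuous images in a separable
metrizable space is countable. -/
def ProjectivelyCountable (X : Type u) [TopologicalSpace X] : Prop :=
  ∀ (M : Type u) (_ : TopologicalSpace M) (_ : SeparableSpace M) (_ : MetrizableSpace M)
    (f : X → M), Continuous f → (range f).Countable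

/-- The Alster property. -/
def AlsterSpace (X : Type*) [TopologicalSpace X] : Prop :=
  ∀ G : Set (Set X), (∀ g ∈ G, IsGδ g) → ⋃₀ G = univ →
    (∀ K : Set X, IsCompact K → ∃ F : Set (Set X), F ⊆ G ∧ F.Finite ∧ K ⊆ ⋃₀ F) →
    ∃ C : Set (Set X), C ⊆ G ∧ C.Countable ∧ ⋃₀ C = univ

/-- A compact set has countable character if it has a countable neighborhood base of
open sets. -/
def HasCountableChar {X : Type*} [TopologicalSpace X] (L : Set X) : Prop :=
  ∃ B : ℕ → Set X, (∀ n, IsOpen (B n) ∧ L ⊆ B n) ∧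
    ∀ U : Set X, IsOpen U → L ⊆ U → ∃ n, B n ⊆ U

/-- A space is of countable type if every compact set is contained in a compact set
of countable character. -/
def CountableType (X : Type*) [TopologicalSpace X] : Prop :=
  ∀ K : Set X, IsCompact K → ∃ L : Set X, IsCompact L ∧ K ⊆ L ∧ HasCountableChar L

/-- A space is nowhere locally compact if no point has a compact neighborhood. -/
def NowhereLocallyCompact (X : Type*) [TopologicalSpace X] : Prop :=
  ∀ x : X, ∀ K ∈ nhds x, ¬ IsCompact (K : Set X)

/-- Weight at most `c`: there is a basis of cardinality at most `c`. -/
def WeightLE (X : Type u) [TopologicalSpace X] (c : Cardinal.{u}) : Prop :=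
  ∃ B : Set (Set X), IsTopologicalBasis B ∧ Cardinal.mk B ≤ c

/-- A space is Frolík if it is homeomorphic to a closed subspace of a countable product
of σ-compact (Tychonoff) spaces. -/
def FrolikSpace (X : Type u) [TopologicalSpace X] : Prop :=
  ∃ (Y : ℕ → Type u) (_ : ∀ n, TopologicalSpace (Y n)) (_ : ∀ n, T35Space (Y n))
    (_ : ∀ n, SigmaCompactSpace (Y n)) (C : Set (∀ n, Y n)),
    IsClosed C ∧ Nonempty (X ≃ₜ ↥C)

/-- An s-space: some compactification has a countable open source for `X`. -/
def SSpace (X : Type u) [TopologicalSpace X] : Prop :=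
  ∃ (K : Type u) (_ : TopologicalSpace K) (_ : CompactSpace K) (_ : T2Space K)
    (e : X → K), Topology.IsEmbedding e ∧ DenseRange e ∧
      ∃ S : Set (Set K), S.Countable ∧ (∀ s ∈ S, IsOpen s) ∧
        ∃ F : Set (Set (Set K)), (∀ T ∈ F, T ⊆ S ∧ T.Nonempty) ∧
          range e = ⋃ T ∈ F, ⋂₀ T

/-- A space is Lindelöf p if it admits a perfect map onto a separable metrizable space. -/
def LindelofP (X : Type u) [TopologicalSpace X] : Prop :=
  ∃ (M : Type u) (_ : TopologicalSpace M) (_ : SeparableSpace M) (_ : MetrizableSpace M)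
    (f : X → M), IsPerfectMap f ∧ Surjective f

/-- A space is proper K-analytic if it admits a perfect map onto an analytic subspace
of `ℝ^ω`. -/
def ProperKAnalytic (X : Type u) [TopologicalSpace X] : Prop :=
  ∃ A : Set (ℕ → ℝ), IsAnalyticSpace ↥A ∧ ∃ f : X → ↥A, IsPerfectMap f ∧ Surjective f

/-- A space is proper K-Lusin if it admits a perfect map onto a Lusin subspace of `ℝ^ω`. -/
def ProperKLusin (X : Type u) [TopologicalSpace X] : Prop :=
  ∃ A : Set (ℕ → ℝ), IsLusinSpace ↥A ∧ ∃ f : X → ↥A, IsPerfectMap f ∧ Surjective f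

/-- A space is absolute Borel if, viewed as a subset of its Stone–Čech compactification,
it belongs to the σ-algebra generated by the closed sets. -/
def AbsoluteBorel (X : Type u) [TopologicalSpace X] : Prop :=
  MeasurableSet[MeasurableSpace.generateFrom {s : Set (StoneCech X) | IsClosed s}]
    (Set.range (stoneCechUnit : X → StoneCech X))

open Filter Topology

/-- Auxiliary: a closed map with compact fibers pulls back Lindelöf spaces to Lindelöf
spaces. -/
theorem lindelofSpace_of_isClosedMap_compact_fibers {X : Type u} {Y : Type v}
    [TopologicalSpace X] [TopologicalSpace Y] [LindelofSpace Y]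
    (f : X → Y) (hclosed : IsClosedMap f) (hfib : ∀ y : Y, IsCompact (f ⁻¹' {y})) :
    LindelofSpace X := by
  constructor
  rw [isLindelof_iff_countable_subcover]
  intro ι U hUo hsU
  -- for each `y`, a finite subcover of the fiber
  have hfibcov : ∀ y : Y, ∃ t : Finset ι, f ⁻¹' {y} ⊆ ⋃ i ∈ t, U i := fun y =>
    (hfib y).elim_finite_subcover U hUo fun x _ => hsU (mem_univ x)
  choose t ht using hfibcov
  set V : Y → Set X := fun y => ⋃ i ∈ t y, U i with hV
  have hVo : ∀ y, IsOpen (V y) := fun y => isOpen_biUnion fun i _ => hUo i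
  set W : Y → Set Y := fun y => (f '' (V y)ᶜ)ᶜ with hW
  have hWo : ∀ y, IsOpen (W y) := fun y => (hclosed _ (hVo y).isClosed_compl).isOpen_compl
  have hyW : ∀ y, y ∈ W y := by
    intro y hy
    rcases hy with ⟨x, hx, rfl⟩
    exact hx (ht _ rfl)
  have hpre : ∀ y, f ⁻¹' (W y) ⊆ V y := by
    intro y x hx
    by_contra hxV
    exact hx ⟨x, hxV, rfl⟩
  obtain ⟨T, hTc, hTcov⟩ := LindelofSpace.elim_nhds_subcover W fun y => (hWo y).mem_nhds (hyW y)
  refine ⟨⋃ y ∈ T, (t y : Set ι), hTc.biUnion fun y _ => (t y).countable_toSet, ?_⟩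
  intro x _
  have : f x ∈ ⋃ y ∈ T, W y := hTcov ▸ mem_univ (f x)
  rcases mem_iUnion₂.1 this with ⟨y, hyT, hxy⟩
  have : x ∈ V y := hpre y hxy
  rcases mem_iUnion₂.1 this with ⟨i, hit, hxi⟩
  exact mem_iUnion₂.2 ⟨i, mem_iUnion₂.2 ⟨y, hyT, hit⟩, hxi⟩

/-- Metrizable perfect pre-images of analytic spaces are analytic. -/
theorem metrizable_perfect_preimage_analytic {X Y : Type u}
    [TopologicalSpace X] [T35Space X] [MetrizableSpace X]
    [TopologicalSpace Y] [T35Space Y]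
    (f : X → Y) (hf : IsPerfectMap f) (hsurj : Surjective f)
    (hY : IsAnalyticSpace Y) : IsAnalyticSpace X := by
  classical
  obtain ⟨g, hgc, hgs⟩ := hY
  -- `Y` is Lindelöf as a continuous image of the Lindelöf space `ℕ → ℕ`
  haveI hYL : LindelofSpace Y := by
    constructor
    have : IsLindelof (range g) := by
      simpa using (isLindelof_univ (X := ℕ → ℕ)).image hgc
    rwa [hgs.range_eq] at this
  -- hence `X` is Lindelöf, being a perfect preimage, hence second countable
  haveI hXL : LindelofSpace X := lindelofSpace_of_isClosedMap_compact_fibers f hf.2.1 hf.2.2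
  haveI : SecondCountableTopology X := inferInstance
  -- embed `X` into `ℓ∞`
  obtain ⟨e, he⟩ := TopologicalSpace.exists_embedding_l_infty X
  -- the closure of the range of `e` is a Polish space `C`
  set C : Set (BoundedContinuousFunction ℕ ℝ) := closure (range e) with hC
  haveI : SeparableSpace C :=
    ((TopologicalSpace.isSeparable_range he.continuous).closure).separableSpace
  haveI : CompleteSpace C := isClosed_closure.completeSpace_coe
  haveI : PolishSpace C := inferInstance
  -- the pullback space `E`
  set T : Set ((ℕ → ℕ) × X) := {p | g p.1 = f p.2} with hT
  let e' : X → C := fun x => ⟨e x, subset_closure (mem_range_self x)⟩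
  have he'c : Continuous e' := he.continuous.subtype_mk _
  have he'i : Injective e' := fun a b hab => he.injective (congrArg Subtype.val hab)
  let ψ : T → (ℕ → ℕ) × C := fun p => (p.val.1, e' p.val.2)
  have hψc : Continuous ψ :=
    ((continuous_fst.comp continuous_subtype_val).prodMk
      (he'c.comp (continuous_snd.comp continuous_subtype_val)))
  -- `f` is a proper map
  have hfp : IsProperMap f :=
    isProperMap_iff_isClosedMap_and_compact_fibers.mpr ⟨hf.1, hf.2.1, hf.2.2⟩
  -- `ψ` is a proper map
  have hψp : IsProperMap ψ := by
    rw [isProperMap_iff_ultrafilter]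
    refine ⟨hψc, fun 𝒰 w hw => ?_⟩
    obtain ⟨σ, c⟩ := w
    have h1 : Tendsto (fun p : T => p.val.1) 𝒰 (𝓝 σ) :=
      (continuous_fst.tendsto _).comp hw
    have h2 : Tendsto (fun p : T => e' p.val.2) 𝒰 (𝓝 c) :=
      (continuous_snd.tendsto _).comp hw
    have hEq : (fun p : T => f p.val.2) = fun p : T => g p.val.1 :=
      funext fun p => p.2.symm
    have h3 : Tendsto (f ∘ fun p : T => p.val.2) 𝒰 (𝓝 (g σ)) := by
      show Tendsto (fun p : T => f p.val.2) 𝒰 (𝓝 (g σ))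
      rw [hEq]
      exact (hgc.tendsto σ).comp h1
    obtain ⟨x, hfx, hle⟩ :=
      hfp.ultrafilter_le_nhds_of_tendsto (𝒰 := 𝒰.map fun p : T => p.val.2) h3
    have hx2 : Tendsto (fun p : T => p.val.2) (𝒰 : Filter T) (𝓝 x) := hle
    have h4 : Tendsto (fun p : T => e' p.val.2) 𝒰 (𝓝 (e' x)) :=
      (he'c.tendsto x).comp hx2
    have hcx : c = e' x := tendsto_nhds_unique h2 h4
    refine ⟨⟨(σ, x), hfx.symm⟩, ?_, ?_⟩
    · simp [ψ, hcx]
    · have hmap : Tendsto (Subtype.val : T → (ℕ → ℕ) × X) 𝒰 (𝓝 (σ, x)) := by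
        rw [nhds_prod_eq]
        exact h1.prodMk hx2
      rw [nhds_subtype_eq_comap]
      exact Filter.map_le_iff_le_comap.mp hmap
  -- hence `ψ` is a closed embedding, so `T` is Polish
  have hψi : Injective ψ := by
    rintro ⟨⟨σ₁, x₁⟩, h₁⟩ ⟨⟨σ₂, x₂⟩, h₂⟩ h
    have hσ : σ₁ = σ₂ := congrArg Prod.fst h
    have hx : x₁ = x₂ := he'i (congrArg Prod.snd h)
    simp [hσ, hx]
  have hψce : Topology.IsClosedEmbedding ψ :=
    .of_continuous_injective_isClosedMap hψc hψi hψp.isClosedMap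
  haveI : PolishSpace T := hψce.polishSpace
  -- `T` is nonempty
  haveI : Nonempty T := by
    obtain ⟨x₀, hx₀⟩ := hsurj (g fun _ => 0)
    exact ⟨⟨(fun _ => 0, x₀), hx₀.symm⟩⟩
  -- conclude
  obtain ⟨h, hhc, hhs⟩ := PolishSpace.exists_nat_nat_continuous_surjective T
  refine ⟨(fun p : T => p.val.2) ∘ h, ?_, ?_⟩
  · exact (continuous_snd.comp continuous_subtype_val).comp hhc
  · intro x
    obtain ⟨σ, hσ⟩ := hgs (f x)
    obtain ⟨u, hu⟩ := hhs ⟨(σ, x), hσ⟩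
    exact ⟨u, by simp [Function.comp, hu]⟩
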